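/- Representation of the real differential of a slice regular function: let f : Ω_D → ℍ be slice regular with continuously differentiable stem components, and let x = α + Iβ ∈ Ω_D with β > 0, I ∈ 𝕊. Then f is real-differentiable at x, and for every decomposition v = v₁ + v₂ of a tangent vector v ∈ ℍ with v₁ ∈ ℂ_I = ℝ + ℝI and v₂ in the orthogonal complement of ℂ_I (with respect to the standard Euclidean inner product on ℍ ≅ ℝ⁴), the real Fréchet derivative satisfies (df)_x(v₁ + v₂) = v₁·(∂f/∂x)(x) + v₂·(∂_s f)(x). -/

import Mathlib

/- Identify ℍ with `Quaternion ℝ` (an inner product space over ℝ with the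
standard Euclidean inner product), `Im x = x - Re x`, conjugation `star`.
A slice regular function on the circularization of a conjugation-symmetric open
set `D ⊆ ℂ` is induced by a stem function `(F₁, F₂)` with continuously
differentiable components satisfying the Cauchy-Riemann system.  The slice
derivative is induced by `(∂F₁/∂α, ∂F₂/∂α)`; the spherical derivative is
`∂ₛf x = (1/2) (Im x)⁻¹ (f x - f (x^c))`. -/


open Quaternion

noncomputable def imCLM : Quaternion ℝ →L[ℝ] Quaternion ℝ :=
  LinearMap.toContinuousLinearMap
    { toFun := Quaternion.im
      map_add' := fun a b => Quaternion.im_add a b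
      map_smul' := fun r a => by simp }

@[simp] lemma imCLM_apply (q : Quaternion ℝ) : imCLM q = q.im := by simp [imCLM]


noncomputable def reCLM_H : Quaternion ℝ →L[ℝ] ℝ :=
  LinearMap.toContinuousLinearMap
    { toFun := QuaternionAlgebra.re
      map_add' := fun a b => rfl
      map_smul' := fun r a => rfl }

@[simp] lemma reCLM_H_apply (q : Quaternion ℝ) : reCLM_H q = q.re := rfl

lemma imag_unit_sq {p : Quaternion ℝ} (h0 : p.re = 0) (h1 : normSq p = 1) :
    p ^ 2 = -1 := by
  have := Quaternion.normSq_def' p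
  rw [h1] at this
  ext <;> simp [pow_two, Quaternion.re_mul, Quaternion.imI_mul, Quaternion.imJ_mul,
    Quaternion.imK_mul, h0] <;> nlinarith [this]

lemma imag_unit_of_sq {I : Quaternion ℝ} (hI : I ^ 2 = -1) :
    I.re = 0 ∧ normSq I = 1 := by
  have h := hI
  rw [pow_two] at h
  have hre : (I * I).re = (-1 : Quaternion ℝ).re := by rw [h]
  have h1 : (I * I).imI = (-1 : Quaternion ℝ).imI := by rw [h]
  have h2 : (I * I).imJ = (-1 : Quaternion ℝ).imJ := by rw [h]
  have h3 : (I * I).imK = (-1 : Quaternion ℝ).imK := by rw [h]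
  simp [Quaternion.re_mul, Quaternion.imI_mul, Quaternion.imJ_mul, Quaternion.imK_mul] at hre h1 h2 h3
  have hr0 : I.re = 0 := by nlinarith [sq_nonneg I.re, sq_nonneg I.imI, sq_nonneg I.imJ, sq_nonneg I.imK]
  constructor
  · exact hr0
  · rw [Quaternion.normSq_def']; nlinarith [hr0]

set_option maxHeartbeats 1000000 in
/-- **Representation of the real differential of a slice regular function**:
`f` is real-differentiable at `x = α + Iβ` and
`(df)ₓ(v₁ + v₂) = v₁·(∂f/∂x)(x) + v₂·(∂ₛf)(x)` for `v₁ ∈ ℂ_I`, `v₂ ⊥ ℂ_I`. -/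
theorem differential_representation
    (D : Set ℂ) (hDopen : IsOpen D)
    (hDsymm : ∀ z ∈ D, (starRingEnd ℂ) z ∈ D)
    (F₁ F₂ : ℂ → Quaternion ℝ)
    (hstem : ∀ z ∈ D,
      F₁ ((starRingEnd ℂ) z) = F₁ z ∧ F₂ ((starRingEnd ℂ) z) = - F₂ z)
    (f : Quaternion ℝ → Quaternion ℝ)
    (hslice : ∀ z ∈ D, ∀ I : Quaternion ℝ, I ^ 2 = -1 →
      f ((z.re : Quaternion ℝ) + I * (z.im : Quaternion ℝ)) = F₁ z + I * F₂ z)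
    (D₁ D₂ : ℂ → (ℂ →L[ℝ] Quaternion ℝ))
    (hF₁ : ∀ z ∈ D, HasFDerivAt F₁ (D₁ z) z)
    (hF₂ : ∀ z ∈ D, HasFDerivAt F₂ (D₂ z) z)
    (hC1 : ContinuousOn D₁ D ∧ ContinuousOn D₂ D)
    (hCR : ∀ z ∈ D, D₁ z 1 = D₂ z Complex.I ∧ D₁ z Complex.I = - D₂ z 1)
    (z : ℂ) (hz : z ∈ D) (hβ : 0 < z.im)
    (I : Quaternion ℝ) (hI : I ^ 2 = -1) :
    ∃ L : Quaternion ℝ →L[ℝ] Quaternion ℝ,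
      HasFDerivAt f L ((z.re : Quaternion ℝ) + I * (z.im : Quaternion ℝ)) ∧
      ∀ v₁ v₂ : Quaternion ℝ,
        v₁ ∈ Submodule.span ℝ ({1, I} : Set (Quaternion ℝ)) →
        v₂ ∈ (Submodule.span ℝ ({1, I} : Set (Quaternion ℝ)))ᗮ →
        L (v₁ + v₂)
          = v₁ * (D₁ z 1 + I * (D₂ z 1))
            + v₂ * ((2 : ℝ)⁻¹ •
                ((Quaternion.im ((z.re : Quaternion ℝ) + I * (z.im : Quaternion ℝ)))⁻¹
                  * (f ((z.re : Quaternion ℝ) + I * (z.im : Quaternion ℝ))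
                      - f (star ((z.re : Quaternion ℝ) + I * (z.im : Quaternion ℝ)))))) := by
  obtain ⟨hIre, hIns⟩ := imag_unit_of_sq hI
  set x : Quaternion ℝ := (z.re : Quaternion ℝ) + I * (z.im : Quaternion ℝ) with hxdef
  set β : ℝ := z.im with hβdef
  have hβ0 : β ≠ 0 := ne_of_gt hβ
  have hnormI : ‖I‖ = 1 := by
    have h := Quaternion.normSq_eq_norm_mul_self I
    rw [hIns] at h
    nlinarith [norm_nonneg I]
  have himI : I.im = I := by
    ext <;> simp [hIre]
  have himx : x.im = β • I := by
    rw [hxdef, Quaternion.im_add, Quaternion.im_coe, Quaternion.mul_coe_eq_smul]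
    simp [himI]
  have hxre : x.re = z.re := by
    rw [hxdef, Quaternion.re_add, Quaternion.re_coe, Quaternion.mul_coe_eq_smul]
    simp [hIre]
  have hnx : ‖x.im‖ = β := by
    rw [himx, norm_smul, hnormI, Real.norm_eq_abs, abs_of_pos hβ, mul_one]
  -- the functions
  set n : Quaternion ℝ → ℝ := fun q => ‖imCLM q‖ with hndef
  set ζ : Quaternion ℝ → ℂ := fun q => (reCLM_H q : ℂ) + (n q : ℂ) * Complex.I with hζdef
  have hnxx : n x = β := by simpa [hndef] using hnx
  have hζx : ζ x = z := by
    rw [hζdef]; simp [hxre, hnxx, ← hβdef]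
    exact Complex.re_add_im z
  -- derivative of n
  set dn : Quaternion ℝ →L[ℝ] ℝ := (innerSL ℝ I).comp imCLM with hdndef
  have hQ : HasFDerivAt (fun q => ‖imCLM q‖ ^ 2) (2 • (innerSL ℝ (imCLM x)).comp imCLM) x :=
    imCLM.hasFDerivAt.norm_sq
  have hximn : ‖imCLM x‖ = β := by simpa using hnx
  have hx2pos : (0 : ℝ) < ‖imCLM x‖ ^ 2 := by rw [hximn]; positivity
  have hsq : HasDerivAt Real.sqrt (1 / (2 * Real.sqrt (‖imCLM x‖ ^ 2))) (‖imCLM x‖ ^ 2) :=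
    Real.hasDerivAt_sqrt (ne_of_gt hx2pos)
  have hn' : HasFDerivAt (fun q => Real.sqrt (‖imCLM q‖ ^ 2))
      ((1 / (2 * Real.sqrt (‖imCLM x‖ ^ 2))) • (2 • (innerSL ℝ (imCLM x)).comp imCLM)) x :=
    hsq.comp_hasFDerivAt x hQ
  have hfun : (fun q : Quaternion ℝ => Real.sqrt (‖imCLM q‖ ^ 2)) = n :=
    funext fun q => Real.sqrt_sq (norm_nonneg _)
  have hdneq : (1 / (2 * Real.sqrt (‖imCLM x‖ ^ 2))) • (2 • (innerSL ℝ (imCLM x)).comp imCLM) = dn := by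
    ext v
    rw [hdndef]
    simp [himx, real_inner_smul_left, norm_smul, hnormI, Real.norm_eq_abs,
      abs_of_pos hβ]
    field_simp
    rw [Real.sqrt_sq hβ.le]
  have hn : HasFDerivAt n dn x := by rw [← hfun, ← hdneq]; exact hn'
  -- J and its derivative
  set J : Quaternion ℝ → Quaternion ℝ := fun q => (n q)⁻¹ • imCLM q with hJdef
  have hJx : J x = I := by
    rw [hJdef]
    simp [hnxx, himx, smul_smul, inv_mul_cancel₀ hβ0]
  have hninv : HasFDerivAt (fun q => (n q)⁻¹) ((-((n x) ^ 2)⁻¹) • dn) x :=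
    (hasDerivAt_inv (by rw [hnxx]; exact hβ0)).comp_hasFDerivAt x hn
  set dJ : Quaternion ℝ →L[ℝ] Quaternion ℝ :=
    (n x)⁻¹ • imCLM + ((-((n x) ^ 2)⁻¹) • dn).smulRight (imCLM x) with hdJdef
  have hJ : HasFDerivAt J dJ x := hninv.smul imCLM.hasFDerivAt
  -- ζ derivative
  set dζ : Quaternion ℝ →L[ℝ] ℂ :=
    Complex.ofRealCLM.comp reCLM_H + Complex.I • (Complex.ofRealCLM.comp dn) with hdζdef
  have hζ' : HasFDerivAt ζ dζ x := by
    rw [hζdef, hdζdef]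
    exact ((Complex.ofRealCLM.comp reCLM_H).hasFDerivAt).add
      ((Complex.ofRealCLM.hasFDerivAt.comp x hn).mul_const Complex.I)
  -- derivative of g
  have hF₁x : HasFDerivAt F₁ (D₁ z) (ζ x) := by rw [hζx]; exact hF₁ z hz
  have hF₂x : HasFDerivAt F₂ (D₂ z) (ζ x) := by rw [hζx]; exact hF₂ z hz
  set L : Quaternion ℝ →L[ℝ] Quaternion ℝ :=
    (D₁ z).comp dζ + (I • ((D₂ z).comp dζ) + dJ.smulRight (F₂ z)) with hLdef
  have hg : HasFDerivAt (fun q => F₁ (ζ q) + J q * F₂ (ζ q)) L x := by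
    have h1 : HasFDerivAt (fun q => F₁ (ζ q)) ((D₁ z).comp dζ) x := hF₁x.comp x hζ'
    have h2 : HasFDerivAt (fun q => F₂ (ζ q)) ((D₂ z).comp dζ) x := hF₂x.comp x hζ'
    have h3 := hJ.mul' h2
    rw [hJx, hζx] at h3
    exact h1.add h3
  -- f agrees with g near x
  set U : Set (Quaternion ℝ) := {q | ζ q ∈ D ∧ imCLM q ≠ 0} with hUdef
  have hζc : Continuous ζ := by
    rw [hζdef]
    fun_prop
  have hUopen : IsOpen U := by
    have h1 : IsOpen (ζ ⁻¹' D) := hDopen.preimage hζc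
    have h2 : IsOpen {q : Quaternion ℝ | imCLM q ≠ 0} :=
      isOpen_compl_singleton.preimage imCLM.continuous
    exact h1.inter h2
  have hxU : x ∈ U := by
    constructor
    · rw [hζx]; exact hz
    · show imCLM x ≠ 0
      rw [← norm_ne_zero_iff, hximn]; exact hβ0
  have hfg : ∀ q ∈ U, f q = F₁ (ζ q) + J q * F₂ (ζ q) := by
    rintro q ⟨hq1, hq2⟩
    have hnq : 0 < n q := norm_pos_iff.mpr hq2
    have hJre : (J q).re = 0 := by
      rw [hJdef]
      simp only [imCLM_apply, Quaternion.re_smul, Quaternion.re_im, smul_eq_mul, mul_zero]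
    have hJn : ‖J q‖ = 1 := by
      rw [hJdef]
      simp only [norm_smul, Real.norm_eq_abs, abs_of_pos (inv_pos.mpr hnq)]
      exact inv_mul_cancel₀ hnq.ne'
    have hJns : normSq (J q) = 1 := by
      rw [Quaternion.normSq_eq_norm_mul_self, hJn]; ring
    have hre : (ζ q).re = reCLM_H q := by rw [hζdef]; simp
    have him : (ζ q).im = n q := by rw [hζdef]; simp
    have harg : ((ζ q).re : Quaternion ℝ) + J q * ((ζ q).im : Quaternion ℝ) = q := by
      rw [hre, him, Quaternion.mul_coe_eq_smul, hJdef]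
      simp only [reCLM_H_apply, imCLM_apply, smul_smul, mul_inv_cancel₀ hnq.ne', one_smul]
      exact Quaternion.re_add_im q
    have := hslice (ζ q) hq1 (J q) (imag_unit_sq hJre hJns)
    rw [harg] at this
    exact this
  have hEq : f =ᶠ[nhds x] fun q => F₁ (ζ q) + J q * F₂ (ζ q) :=
    Filter.eventually_of_mem (hUopen.mem_nhds hxU) hfg
  have hfL : HasFDerivAt f L x := hg.congr_of_eventuallyEq hEq
  refine ⟨L, hfL, ?_⟩
  rintro v₁ v₂ hv₁ hv₂
  -- spherical derivative value
  have hfx : f x = F₁ z + I * F₂ z := hslice z hz I hI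
  have hstarI : star I = -I := by
    ext <;> simp [hIre]
  have hxalt : x = (z.re : Quaternion ℝ) + β • I := by
    rw [hxdef, Quaternion.mul_coe_eq_smul]
  have hstarx : star x = (z.re : Quaternion ℝ) + (-I) * (z.im : Quaternion ℝ) := by
    rw [hxalt, star_add, Quaternion.star_smul, hstarI, Quaternion.star_coe,
      ← hβdef, Quaternion.mul_coe_eq_smul, smul_neg]
  have hII : I * I = -1 := by rw [← pow_two]; exact hI
  have hfstarx : f (star x) = F₁ z - I * F₂ z := by
    rw [hstarx]
    have h := hslice z hz (-I) (by rw [neg_sq]; exact hI)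
    rw [h, neg_mul, ← sub_eq_add_neg]
  have himxinv : (Quaternion.im x)⁻¹ = -(β⁻¹ • I) := by
    rw [himx]
    refine inv_eq_of_mul_eq_one_right ?_
    rw [mul_neg, smul_mul_smul_comm, hII, mul_inv_cancel₀ hβ0]
    simp
  have hsph : (2:ℝ)⁻¹ • ((Quaternion.im x)⁻¹ * (f x - f (star x))) = β⁻¹ • F₂ z := by
    rw [hfx, hfstarx, himxinv]
    have hdiff : (F₁ z + I * F₂ z) - (F₁ z - I * F₂ z) = I * F₂ z + I * F₂ z := by abel
    rw [hdiff]
    rw [neg_mul, smul_mul_assoc, mul_add, ← mul_assoc, hII]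
    simp only [neg_one_mul, smul_smul, smul_neg, neg_neg]
    module
  have h1mem : (1 : Quaternion ℝ) ∈ Submodule.span ℝ ({1, I} : Set (Quaternion ℝ)) :=
    Submodule.subset_span (Set.mem_insert _ _)
  have hImem : I ∈ Submodule.span ℝ ({1, I} : Set (Quaternion ℝ)) :=
    Submodule.subset_span (Set.mem_insert_of_mem _ rfl)
  have hv2re : v₂.re = 0 := by
    have h := (Submodule.mem_orthogonal _ _).mp hv₂ 1 h1mem
    simpa [Quaternion.inner_def] using h
  have hv2I : inner ℝ I v₂ = 0 := (Submodule.mem_orthogonal _ _).mp hv₂ I hImem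
  have hv2im : v₂.im = v₂ := by ext <;> simp [hv2re]
  have hLv : ∀ v : Quaternion ℝ, L v =
      D₁ z ((v.re : ℂ) + Complex.I * ((inner ℝ I v.im : ℝ) : ℂ))
      + (I * D₂ z ((v.re : ℂ) + Complex.I * ((inner ℝ I v.im : ℝ) : ℂ))
      + (β⁻¹ • (v.im - (inner ℝ I v.im : ℝ) • I)) * F₂ z) := by
    intro v
    rw [hLdef, hdζdef, hdJdef, hdndef]
    simp only [ContinuousLinearMap.add_apply, ContinuousLinearMap.comp_apply,
      ContinuousLinearMap.smul_apply, ContinuousLinearMap.smulRight_apply,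
      Complex.ofRealCLM_apply, reCLM_H_apply, imCLM_apply, innerSL_apply_apply, smul_eq_mul,
      hnxx, himx]
    have hsc : β⁻¹ • v.im + (-(β ^ 2)⁻¹ * inner ℝ I v.im) • β • I
        = β⁻¹ • (v.im - (inner ℝ I v.im : ℝ) • I) := by
      rw [smul_smul, smul_sub, smul_smul, sub_eq_add_neg, ← neg_smul]
      congr 2
      field_simp
    rw [hsc]
  obtain ⟨a, b, hab⟩ := Submodule.mem_span_pair.mp hv₁
  have hIinner : inner ℝ I I = 1 := by
    rw [Quaternion.inner_self, hIns]
  have hv1im : v₁.im = b • I := by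
    rw [← hab]; simp [himI]
  have hv1re : v₁.re = a := by
    rw [← hab]; simp [hIre]
  have hv1inner : inner ℝ I v₁.im = (b : ℝ) := by
    rw [hv1im, real_inner_smul_right, hIinner, mul_one]
  have hII' : I * (I * D₂ z 1) = -(D₂ z 1) := by
    rw [← mul_assoc, hII, neg_one_mul]
  have hcarg : ((a : ℂ) + Complex.I * (b : ℂ)) = a • (1 : ℂ) + b • Complex.I := by
    simp [Complex.real_smul]; ring
  have hLv1 : L v₁ = v₁ * (D₁ z 1 + I * D₂ z 1) := by
    rw [hLv v₁, hv1re, hv1inner, hv1im, hcarg, map_add, map_smul, map_smul,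
      map_add, map_smul, map_smul, (hCR z hz).2, ← (hCR z hz).1, ← hab]
    simp only [sub_self, smul_zero, zero_mul, add_zero]
    simp only [add_mul, smul_mul_assoc, one_mul, mul_add, mul_smul_comm, hII']
    module
  have hLv2 : L v₂ = v₂ * (β⁻¹ • F₂ z) := by
    rw [hLv v₂, hv2im, hv2re, hv2I]
    simp only [Complex.ofReal_zero, mul_zero, add_zero, zero_add, map_zero, zero_smul,
      sub_zero, mul_smul_comm, smul_mul_assoc]
  rw [map_add, hLv1, hLv2, hsph]
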